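/- Let k, r, e, d, b be positive integers with 1 ≤ k ≤ r, d + 1 ≥ (e+1)(r+1), and C(d+r+1, r+1) < (e+1)·C(b+1+k, k). Then d < b and (d/b)^r · (d+1)/(r+1) < e + 1. -/

import Mathlib

lemma aux_mono (m k : ℕ) : ∀ j, k ≤ j → (m + k).choose k ≤ (m + j).choose j := by
  intro j hj
  induction j, hj using Nat.le_induction with
  | base => exact le_rfl
  | succ n hn ih =>
    calc (m + k).choose k ≤ (m + n).choose n := ih
      _ ≤ (m + n).choose n + (m + n).choose (n + 1) := Nat.le_add_right _ _
      _ = (m + (n + 1)).choose (n + 1) := by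
          rw [show m + (n + 1) = (m + n) + 1 from by omega, Nat.choose_succ_succ]

lemma aux_pow (d b : ℕ) (h : d ≤ b) :
    ∀ r, d ^ r * (b + 1 + r).choose r ≤ b ^ r * (d + 1 + r).choose r := by
  intro r
  induction r with
  | zero => simp
  | succ n ih =>
    have key_b : (b + 1 + (n + 1)).choose (n + 1) * (n + 1)
        = (b + 1 + n + 1) * (b + 1 + n).choose n := by
      rw [show b + 1 + (n + 1) = (b + 1 + n) + 1 from by omega,
        ← Nat.add_one_mul_choose_eq]
    have key_d : (d + 1 + (n + 1)).choose (n + 1) * (n + 1)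
        = (d + 1 + n + 1) * (d + 1 + n).choose n := by
      rw [show d + 1 + (n + 1) = (d + 1 + n) + 1 from by omega,
        ← Nat.add_one_mul_choose_eq]
    apply Nat.le_of_mul_le_mul_right ?_ (show 0 < n + 1 by omega)
    calc d ^ (n + 1) * (b + 1 + (n + 1)).choose (n + 1) * (n + 1)
        = d ^ (n + 1) * ((b + 1 + (n + 1)).choose (n + 1) * (n + 1)) := by ring
      _ = (d * (b + 1 + n + 1)) * (d ^ n * (b + 1 + n).choose n) := by
          rw [key_b]; ring
      _ ≤ (d * (b + 1 + n + 1)) * (b ^ n * (d + 1 + n).choose n) :=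
          Nat.mul_le_mul le_rfl ih
      _ ≤ (b * (d + 1 + n + 1)) * (b ^ n * (d + 1 + n).choose n) :=
          Nat.mul_le_mul (by nlinarith) le_rfl
      _ = b ^ (n + 1) * ((d + 1 + (n + 1)).choose (n + 1) * (n + 1)) := by
          rw [key_d]; ring
      _ = b ^ (n + 1) * (d + 1 + (n + 1)).choose (n + 1) * (n + 1) := by ring

theorem choose_inequality_consequence (k r e d b : ℕ) (hk : 1 ≤ k) (hkr : k ≤ r)
    (he : 1 ≤ e) (hd : 1 ≤ d) (hb : 1 ≤ b)
    (hd1 : (e + 1) * (r + 1) ≤ d + 1)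
    (hch : (d + r + 1).choose (r + 1) < (e + 1) * (b + 1 + k).choose k) :
    d < b ∧ ((d : ℝ) / (b : ℝ)) ^ r * (((d : ℝ) + 1) / ((r : ℝ) + 1)) < (e : ℝ) + 1 := by
  have key : (d + r + 1).choose (r + 1) * (r + 1) = (d + r + 1).choose r * (d + 1) := by
    rw [Nat.choose_succ_right_eq]
    congr 1
    omega
  have hdb : d < b := by
    by_contra hcon
    push_neg at hcon
    have h1 : (b + 1 + k).choose k ≤ (d + 1 + k).choose k :=
      Nat.choose_le_choose _ (by omega)
    have h2 : (d + 1 + k).choose k ≤ (d + 1 + r).choose r := aux_mono (d + 1) k r hkr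
    have h2' : (d + 1 + k).choose k ≤ (d + r + 1).choose r := by
      rwa [show d + 1 + r = d + r + 1 from by omega] at h2
    have h3 : (e + 1) * (b + 1 + k).choose k * (r + 1)
        ≤ (d + r + 1).choose (r + 1) * (r + 1) := by
      calc (e + 1) * (b + 1 + k).choose k * (r + 1)
          = (e + 1) * (r + 1) * (b + 1 + k).choose k := by ring
        _ ≤ (d + 1) * ((d + r + 1).choose r) :=
            Nat.mul_le_mul hd1 (le_trans h1 h2')
        _ = (d + r + 1).choose (r + 1) * (r + 1) := by rw [key]; ring
    have h4 : (e + 1) * (b + 1 + k).choose k ≤ (d + r + 1).choose (r + 1) :=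
      Nat.le_of_mul_le_mul_right h3 (by omega)
    omega
  have hnat : d ^ r * (d + 1) < (e + 1) * (r + 1) * b ^ r := by
    have h1 : (b + 1 + k).choose k ≤ (b + 1 + r).choose r := aux_mono (b + 1) k r hkr
    have h2 : d ^ r * (b + 1 + r).choose r ≤ b ^ r * (d + 1 + r).choose r :=
      aux_pow d b (le_of_lt hdb) r
    have hbr : 0 < b ^ r := Nat.pow_pos hb
    have hmain : d ^ r * (d + 1) * (b + 1 + r).choose r
        < (e + 1) * (r + 1) * b ^ r * (b + 1 + r).choose r := by
      calc d ^ r * (d + 1) * (b + 1 + r).choose r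
          = (d + 1) * (d ^ r * (b + 1 + r).choose r) := by ring
        _ ≤ (d + 1) * (b ^ r * (d + 1 + r).choose r) := Nat.mul_le_mul le_rfl h2
        _ = b ^ r * ((d + r + 1).choose r * (d + 1)) := by
            rw [show d + 1 + r = d + r + 1 from by omega]; ring
        _ = b ^ r * ((d + r + 1).choose (r + 1) * (r + 1)) := by rw [key]
        _ < b ^ r * ((e + 1) * (b + 1 + k).choose k * (r + 1)) := by
            apply mul_lt_mul_of_pos_left _ hbr
            exact mul_lt_mul_of_pos_right hch (by omega)
        _ ≤ b ^ r * ((e + 1) * (b + 1 + r).choose r * (r + 1)) := by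
            apply Nat.mul_le_mul le_rfl
            exact Nat.mul_le_mul (Nat.mul_le_mul le_rfl h1) le_rfl
        _ = (e + 1) * (r + 1) * b ^ r * (b + 1 + r).choose r := by ring
    exact lt_of_mul_lt_mul_right hmain (Nat.zero_le _)
  refine ⟨hdb, ?_⟩
  have hb0 : (0 : ℝ) < (b : ℝ) := by exact_mod_cast hb
  rw [div_pow, div_mul_div_comm, div_lt_iff₀ (by positivity)]
  have h' : ((d ^ r * (d + 1) : ℕ) : ℝ) < (((e + 1) * (r + 1) * b ^ r : ℕ) : ℝ) := by
    exact_mod_cast hnat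
  push_cast at h'
  calc (d : ℝ) ^ r * ((d : ℝ) + 1) < ((e : ℝ) + 1) * ((r : ℝ) + 1) * (b : ℝ) ^ r := h'
    _ = ((e : ℝ) + 1) * ((b : ℝ) ^ r * ((r : ℝ) + 1)) := by ring
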